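/- Fix λ with 0 < λ < π/√3 and set q_n = t_n / C(n², 3), where t_n = (3/π²) n⁴ log n + O(n⁴). Then log [ C(n², ⌊λn⌋) · (1 − q_n)^{C(⌊λn⌋, 3)} ] ∼ (λ − 3λ³/π²) · n · log n as n → ∞; in particular this expression tends to +∞ if λ < π/√3 and to −∞ if λ > π/√3. -/

import Mathlib

open Filter Asymptotics Real
set_option maxHeartbeats 1600000


lemma pow_le_exp_mul_factorial : ∀ n : ℕ, (n:ℝ)^n ≤ Real.exp n * n.factorial := by
  intro n
  induction n with
  | zero => simp
  | succ n ih =>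
    have hstep : ((n+1:ℕ):ℝ)^n ≤ Real.exp 1 * Real.exp n * n.factorial := by
      rcases Nat.eq_zero_or_pos n with h0 | hn
      · subst h0; simp
      · have hnR : (0:ℝ) < n := by exact_mod_cast hn
        have h1 : ((n+1:ℕ):ℝ)^n = (n:ℝ)^n * (1 + 1/(n:ℝ))^n := by
          rw [← mul_pow]; congr 1; field_simp; exact Nat.cast_succ n
        have h2 : (1 + 1/(n:ℝ))^n ≤ Real.exp 1 := by
          have := Real.add_one_le_exp (1/(n:ℝ))
          calc (1 + 1/(n:ℝ))^n ≤ (Real.exp (1/(n:ℝ)))^n := by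
                apply pow_le_pow_left₀ (by positivity)
                linarith
            _ = Real.exp 1 := by
                rw [← Real.exp_nat_mul]
                congr 1; field_simp
        calc ((n+1:ℕ):ℝ)^n = (n:ℝ)^n * (1 + 1/(n:ℝ))^n := h1
          _ ≤ (Real.exp n * n.factorial) * Real.exp 1 := by
              apply mul_le_mul ih h2 (by positivity) (by positivity)
          _ = Real.exp 1 * Real.exp n * n.factorial := by ring
    calc ((n+1:ℕ):ℝ)^(n+1) = ((n+1:ℕ):ℝ) * ((n+1:ℕ):ℝ)^n := by ring
      _ ≤ ((n+1:ℕ):ℝ) * (Real.exp 1 * Real.exp n * n.factorial) := by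
          apply mul_le_mul_of_nonneg_left hstep (by positivity)
      _ = Real.exp (n+1) * ((n+1) * n.factorial) := by
          rw [Real.exp_add]; push_cast; ring
      _ = Real.exp ((n+1:ℕ)) * ((n+1:ℕ).factorial) := by
          rw [Nat.factorial_succ]; push_cast; ring

lemma log_factorial_bounds {k : ℕ} (hk : 1 ≤ k) :
    (k:ℝ) * Real.log k - k ≤ Real.log (k.factorial) ∧
      Real.log (k.factorial) ≤ (k:ℝ) * Real.log k := by
  have hkR : (1:ℝ) ≤ (k:ℝ) := by exact_mod_cast hk
  have hfac : (0:ℝ) < (k.factorial : ℝ) := by exact_mod_cast k.factorial_pos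
  constructor
  · have h := pow_le_exp_mul_factorial k
    have h2 : Real.log ((k:ℝ)^k) ≤ Real.log (Real.exp k * k.factorial) :=
      Real.log_le_log (by positivity) h
    rw [Real.log_pow, Real.log_mul (Real.exp_pos _).ne' hfac.ne', Real.log_exp] at h2
    linarith
  · have h : (k.factorial : ℝ) ≤ (k:ℝ)^k := by
      exact_mod_cast k.factorial_le_pow
    have h2 := Real.log_le_log hfac h
    rwa [Real.log_pow] at h2

lemma partA (lam : ℝ) (hlam : 0 < lam) :
    ∀ᶠ n : ℕ in atTop, (0:ℝ) < ((n^2).choose ⌊lam * n⌋₊ : ℝ) ∧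
      |Real.log ((n^2).choose ⌊lam * n⌋₊ : ℝ) - lam * n * Real.log n| ≤
        (1 + lam + lam * (|Real.log lam| + 1)) * n := by
  have hev1 : ∀ᶠ n : ℕ in atTop, (3:ℝ) ≤ (n:ℝ) :=
    tendsto_natCast_atTop_atTop.eventually_ge_atTop 3
  have hev2 : ∀ᶠ n : ℕ in atTop, 3/lam ≤ (n:ℝ) :=
    tendsto_natCast_atTop_atTop.eventually_ge_atTop _
  have hev3 : ∀ᶠ n : ℕ in atTop, 2*lam ≤ (n:ℝ) :=
    tendsto_natCast_atTop_atTop.eventually_ge_atTop _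
  filter_upwards [hev1, hev2, hev3] with n hx3 h2 h3
  set x : ℝ := (n:ℝ) with hxdef
  set k : ℕ := ⌊lam * x⌋₊ with hkdef
  have hx0 : (0:ℝ) < x := by linarith
  have hlx : 3 ≤ lam * x := by
    rw [div_le_iff₀ hlam] at h2; linarith [h2]
  have hKle : (k:ℝ) ≤ lam * x := Nat.floor_le (by positivity)
  have hKge : lam * x - 1 ≤ (k:ℝ) := (Nat.sub_one_lt_floor _).le
  have hK2 : (2:ℝ) ≤ (k:ℝ) := by linarith
  have hk1 : 1 ≤ k := by exact_mod_cast (by linarith : (1:ℝ) ≤ (k:ℝ))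
  have hKx2 : (k:ℝ) ≤ x^2/2 := by nlinarith
  have hkN : k ≤ n^2 := by
    have : (k:ℝ) ≤ ((n^2 : ℕ):ℝ) := by push_cast; nlinarith
    exact_mod_cast this
  have hCpos : (0:ℝ) < ((n^2).choose k : ℝ) := by
    exact_mod_cast Nat.choose_pos hkN
  refine ⟨hCpos, ?_⟩
  set L : ℝ := Real.log x with hLdef
  have hL1 : 1 ≤ L := by
    have h1 : Real.exp 1 ≤ x := by
      have := Real.exp_one_lt_d9; linarith
    have := Real.log_le_log (Real.exp_pos 1) h1
    rwa [Real.log_exp] at this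
  have hL0 : 0 ≤ L := by linarith
  have hLx : L ≤ x := by
    have := Real.log_le_sub_one_of_pos hx0; linarith
  have hfacpos : (0:ℝ) < (k.factorial : ℝ) := by exact_mod_cast k.factorial_pos
  have hN2 : ((n^2 : ℕ):ℝ) = x^2 := by push_cast; ring
  have hx2 : (0:ℝ) < ((n^2 : ℕ):ℝ) := by rw [hN2]; positivity
  -- upper bound
  have hub : Real.log ((n^2).choose k : ℝ) ≤ 2*(k:ℝ)*L - Real.log (k.factorial) := by
    have h1 : ((n^2).choose k : ℝ) ≤ ((n^2:ℕ):ℝ)^k / (k.factorial : ℝ) := by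
      have := Nat.choose_le_pow_div (α := ℝ) k (n^2)
      convert this using 2 <;> push_cast <;> ring
    have h2 := Real.log_le_log hCpos h1
    rw [Real.log_div (pow_ne_zero _ hx2.ne') hfacpos.ne', Real.log_pow, hN2] at h2
    rw [Real.log_pow] at h2
    push_cast at h2
    calc Real.log ((n^2).choose k : ℝ) ≤ (k:ℝ) * (2 * L) - Real.log (k.factorial) := h2
      _ = 2*(k:ℝ)*L - Real.log (k.factorial) := by ring
  -- lower bound
  have hsub : x^2/2 ≤ ((n^2 + 1 - k : ℕ):ℝ) := by
    have hle : k ≤ n^2 + 1 := hkN.trans (Nat.le_succ _)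
    have : ((n^2 + 1 - k : ℕ):ℝ) = x^2 + 1 - (k:ℝ) := by
      rw [Nat.cast_sub hle]; push_cast; ring
    rw [this]; linarith
  have hlb : 2*(k:ℝ)*L - (k:ℝ)*Real.log 2 - Real.log (k.factorial)
      ≤ Real.log ((n^2).choose k : ℝ) := by
    have h1 : (((n^2 + 1 - k : ℕ):ℝ))^k / (k.factorial:ℝ) ≤ ((n^2).choose k : ℝ) := by
      have := Nat.pow_le_choose (α := ℝ) k (n^2)
      convert this using 2 <;> push_cast <;> ring
    have hbase : (0:ℝ) < ((n^2 + 1 - k : ℕ):ℝ) := by nlinarith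
    have h2 : Real.log ((((n^2 + 1 - k : ℕ):ℝ))^k / (k.factorial:ℝ))
        ≤ Real.log ((n^2).choose k : ℝ) := Real.log_le_log (by positivity) h1
    rw [Real.log_div (by positivity) hfacpos.ne', Real.log_pow] at h2
    have h3 : Real.log (x^2/2) ≤ Real.log ((n^2 + 1 - k : ℕ):ℝ) :=
      Real.log_le_log (by positivity) hsub
    rw [Real.log_div (by positivity) (by norm_num), Real.log_pow] at h3
    have h4 : (k:ℝ) * (2*L - Real.log 2) ≤ (k:ℝ) * Real.log ((n^2 + 1 - k : ℕ):ℝ) := by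
      apply mul_le_mul_of_nonneg_left _ (by positivity)
      push_cast at h3 ⊢; linarith
    nlinarith [h2, h4]
  obtain ⟨hf1, hf2⟩ := log_factorial_bounds hk1
  -- log k = L + log (k/x)
  have hkpos : (0:ℝ) < (k:ℝ) := by linarith
  have hKlogK : (k:ℝ) * Real.log (k:ℝ) = (k:ℝ)*L + (k:ℝ)*Real.log ((k:ℝ)/x) := by
    have : Real.log (k:ℝ) = L + Real.log ((k:ℝ)/x) := by
      rw [Real.log_div hkpos.ne' hx0.ne']; ring
    rw [this]; ring
  have hlog2 : Real.log 2 ≤ 1 := by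
    have h1 : (2:ℝ) ≤ Real.exp 1 := by
      have := Real.exp_one_gt_d9; linarith
    have := Real.log_le_log (by norm_num) h1
    rwa [Real.log_exp] at this
  have hratio : |Real.log ((k:ℝ)/x)| ≤ |Real.log lam| + 1 := by
    have hup : (k:ℝ)/x ≤ lam := by rw [div_le_iff₀ hx0]; linarith
    have hdn : lam/2 ≤ (k:ℝ)/x := by
      rw [le_div_iff₀ hx0]
      nlinarith
    have h1 : Real.log ((k:ℝ)/x) ≤ Real.log lam := Real.log_le_log (by positivity) hup
    have h2 : Real.log lam - Real.log 2 ≤ Real.log ((k:ℝ)/x) := by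
      have := Real.log_le_log (by positivity) hdn
      rwa [Real.log_div hlam.ne' (by norm_num)] at this
    rw [abs_le]
    constructor
    · have := neg_abs_le (Real.log lam); linarith
    · have := le_abs_self (Real.log lam); linarith
  -- assemble
  have p1 : (k:ℝ)*L ≤ lam*x*L := mul_le_mul_of_nonneg_right hKle hL0
  have p2 : (lam*x-1)*L ≤ (k:ℝ)*L := mul_le_mul_of_nonneg_right hKge hL0
  have p3 : (k:ℝ)*Real.log ((k:ℝ)/x) ≤ lam*x*(|Real.log lam| + 1) := by
    have h1 : (k:ℝ)*Real.log ((k:ℝ)/x) ≤ (k:ℝ)*(|Real.log lam| + 1) := by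
      apply mul_le_mul_of_nonneg_left _ (by positivity)
      have := le_abs_self (Real.log ((k:ℝ)/x)); linarith
    have h2 : (k:ℝ)*(|Real.log lam| + 1) ≤ lam*x*(|Real.log lam| + 1) := by
      apply mul_le_mul_of_nonneg_right hKle (by positivity)
    linarith
  have p4 : -(lam*x*(|Real.log lam| + 1)) ≤ (k:ℝ)*Real.log ((k:ℝ)/x) := by
    have h1 : -((k:ℝ)*(|Real.log lam| + 1)) ≤ (k:ℝ)*Real.log ((k:ℝ)/x) := by
      rw [neg_le]
      calc -((k:ℝ)*Real.log ((k:ℝ)/x)) = (k:ℝ) * (-Real.log ((k:ℝ)/x)) := by ring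
        _ ≤ (k:ℝ)*(|Real.log lam| + 1) := by
            apply mul_le_mul_of_nonneg_left _ (by positivity)
            have := neg_abs_le (Real.log ((k:ℝ)/x)); linarith
    have h2 : (k:ℝ)*(|Real.log lam| + 1) ≤ lam*x*(|Real.log lam| + 1) :=
      mul_le_mul_of_nonneg_right hKle (by positivity)
    linarith
  have p5 : (k:ℝ)*Real.log 2 ≤ lam * x := by
    calc (k:ℝ)*Real.log 2 ≤ (k:ℝ)*1 := mul_le_mul_of_nonneg_left hlog2 (by positivity)
      _ ≤ lam * x := by linarith
  have p6 : 0 ≤ (k:ℝ)*Real.log 2 := by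
    apply mul_nonneg (by positivity)
    exact Real.log_nonneg (by norm_num)
  rw [abs_le]
  constructor <;> linarith [hub, hlb, hf1, hf2, hKlogK, p1, p2, p3, p4, p5, p6, hLx, hL0]

lemma partB (lam : ℝ) (hlam : 0 < lam) (t : ℕ → ℝ)
    (ht : (fun n : ℕ => t n - 3 / π ^ 2 * (n : ℝ) ^ 4 * Real.log n)
      =O[atTop] (fun n : ℕ => (n : ℝ) ^ 4)) :
    ∃ C : ℝ, ∀ᶠ n : ℕ in atTop,
      |((⌊lam * n⌋₊).choose 3 : ℝ) * Real.log (1 - t n / ((n^2).choose 3 : ℝ))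
        + 3*lam^3/π^2 * n * Real.log n| ≤ C * n
      ∧ |t n / ((n^2).choose 3 : ℝ)| ≤ 1/2 := by
  obtain ⟨C₁, hC₁pos, hC₁⟩ := ht.exists_pos
  set M : ℝ := 24*(3/π^2 + C₁) with hMdef
  have hπ : (0:ℝ) < π := Real.pi_pos
  have hM0 : 0 < M := by positivity
  refine ⟨lam^3*M^2/3 + (4*lam^3*C₁ + 72/π^2*(lam^2+lam^3)), ?_⟩
  have hev1 : ∀ᶠ n : ℕ in atTop, (3:ℝ) ≤ (n:ℝ) :=
    tendsto_natCast_atTop_atTop.eventually_ge_atTop 3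
  have hev2 : ∀ᶠ n : ℕ in atTop, 3/lam ≤ (n:ℝ) :=
    tendsto_natCast_atTop_atTop.eventually_ge_atTop _
  have hev4 : ∀ᶠ n : ℕ in atTop, 2*M ≤ (n:ℝ) :=
    tendsto_natCast_atTop_atTop.eventually_ge_atTop _
  filter_upwards [hev1, hev2, hev4, hC₁.bound, eventually_ge_atTop 3] with n hx3 h2 h4 hbnd hn3
  set x : ℝ := (n:ℝ) with hxdef
  set k : ℕ := ⌊lam * x⌋₊ with hkdef
  set L : ℝ := Real.log x with hLdef
  have hx0 : (0:ℝ) < x := by linarith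
  have hL1 : 1 ≤ L := by
    have h1 : Real.exp 1 ≤ x := by
      have := Real.exp_one_lt_d9; linarith
    have := Real.log_le_log (Real.exp_pos 1) h1
    rwa [Real.log_exp] at this
  have hL0 : 0 ≤ L := by linarith
  have hLx : L ≤ x := by
    have := Real.log_le_sub_one_of_pos hx0; linarith
  have hlx : 3 ≤ lam * x := by
    rw [div_le_iff₀ hlam] at h2; linarith [h2]
  have hKle : (k:ℝ) ≤ lam * x := Nat.floor_le (by positivity)
  have hKge : lam * x - 1 ≤ (k:ℝ) := (Nat.sub_one_lt_floor _).le
  have hK2 : (2:ℝ) ≤ (k:ℝ) := by linarith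
  have hk2 : 2 ≤ k := by exact_mod_cast hK2
  -- D = choose (n^2) 3
  set D : ℝ := ((n^2).choose 3 : ℝ) with hDdef
  have hn2 : 2 ≤ n^2 := by nlinarith
  have hx9 : 9 ≤ x^2 := by nlinarith
  have hD6 : D * 6 = x^2*(x^2-1)*(x^2-2) := by
    have h1 : (n^2).descFactorial 3 = 6 * (n^2).choose 3 :=
      Nat.descFactorial_eq_factorial_mul_choose _ _
    have h2' : (n^2).descFactorial 3 = (n^2 - 2) * ((n^2 - 1) * (n^2 * 1)) := by
      simp [Nat.descFactorial]
    have hcast := congrArg (fun m : ℕ => (m:ℝ)) (h1.symm.trans h2')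
    rw [Nat.cast_mul, Nat.cast_mul, Nat.cast_mul, Nat.cast_sub hn2,
      Nat.cast_sub (by omega : 1 ≤ n^2)] at hcast
    push_cast at hcast
    rw [hDdef]; push_cast
    nlinarith [hcast]
  have hDlb : x^6/24 ≤ D := by
    have h5 : 9*x^4 ≤ x^2*x^4 :=
      mul_le_mul_of_nonneg_right hx9 (by positivity)
    nlinarith [hD6, h5, sq_nonneg x, pow_nonneg hx0.le 6]
  have hDub : |D - x^6/6| ≤ x^4 := by
    have h5 : 9*x^2 ≤ x^2*x^2 :=
      mul_le_mul_of_nonneg_right hx9 (sq_nonneg x)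
    rw [abs_le]
    constructor <;> nlinarith [hD6, h5, sq_nonneg x, pow_nonneg hx0.le 4]
  have hDpos : 0 < D := by nlinarith
  -- P = choose k 3
  set P : ℝ := (k.choose 3 : ℝ) with hPdef
  have hP6 : P * 6 = (k:ℝ)*((k:ℝ)-1)*((k:ℝ)-2) := by
    have h1 : k.descFactorial 3 = 6 * k.choose 3 :=
      Nat.descFactorial_eq_factorial_mul_choose _ _
    have h2' : k.descFactorial 3 = (k - 2) * ((k - 1) * (k * 1)) := by
      simp [Nat.descFactorial]
    have hcast := congrArg (fun m : ℕ => (m:ℝ)) (h1.symm.trans h2')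
    rw [Nat.cast_mul, Nat.cast_mul, Nat.cast_mul, Nat.cast_sub hk2,
      Nat.cast_sub (by omega : 1 ≤ k)] at hcast
    push_cast at hcast
    rw [hPdef]
    nlinarith [hcast]
  have hP0 : 0 ≤ P := by positivity
  have hK0 : (0:ℝ) ≤ (k:ℝ) := by positivity
  have hc1 : (k:ℝ)^3 ≤ (lam*x)^3 := pow_le_pow_left₀ hK0 hKle 3
  have hc2 : (lam*x)^3 - 3*(lam*x)^2 ≤ (k:ℝ)^3 := by
    have := pow_le_pow_left₀ (by linarith : (0:ℝ) ≤ lam*x - 1) hKge 3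
    nlinarith [this, hlx]
  have hKsq : (k:ℝ)^2 ≤ (lam*x)^2 := pow_le_pow_left₀ hK0 hKle 2
  clear_value k D P
  have hP6' : P * 6 = (k:ℝ)^3 - 3*(k:ℝ)^2 + 2*(k:ℝ) := by linear_combination hP6
  have hPub : P ≤ lam^3*x^3/6 := by
    have h5 : (0:ℝ) ≤ (k:ℝ)*(3*(k:ℝ)-2) := mul_nonneg hK0 (by linarith)
    nlinarith [hP6', hc1, h5]
  have hax : 3*(lam*x) ≤ (lam*x)^2 := by
    nlinarith [mul_nonneg (show (0:ℝ) ≤ lam*x - 3 by linarith) (show (0:ℝ) ≤ lam*x by linarith)]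
  have hPapprox : |P - lam^3*x^3/6| ≤ lam^2*x^2 := by
    rw [abs_le]
    constructor <;> linarith [hP6', hc1, hc2, hKsq, hK2, hKle, hax, sq_nonneg ((k:ℝ)), hK0]
  -- bound on t
  have hbnd' : |t n - 3/π^2*x^4*L| ≤ C₁ * x^4 := by
    have h5 : ‖t n - 3/π^2*x^4*L‖ ≤ C₁ * ‖x^4‖ := hbnd
    rwa [Real.norm_eq_abs, Real.norm_eq_abs,
      abs_of_nonneg (show (0:ℝ) ≤ x^4 by positivity)] at h5
  have htub : |t n| ≤ (3/π^2 + C₁)*x^4*L := by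
    have h1 : |t n| ≤ |t n - 3/π^2*x^4*L| + |3/π^2*x^4*L| := by
      calc |t n| = |(t n - 3/π^2*x^4*L) + 3/π^2*x^4*L| := by ring_nf
        _ ≤ _ := abs_add_le _ _
    have h2' : |3/π^2*x^4*L| = 3/π^2*x^4*L := abs_of_nonneg (by positivity)
    have h3 : C₁ * x^4 ≤ C₁ * x^4 * L := by
      have h6 := mul_le_mul_of_nonneg_left hL1
        (mul_nonneg hC₁pos.le (pow_nonneg hx0.le 4))
      linarith [h6]
    rw [h2'] at h1; linarith [hbnd']
  set q : ℝ := t n / D with hqdef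
  clear_value q
  have hMLx2 : (0:ℝ) ≤ M*L/x^2 := by positivity
  have h5 : |t n| ≤ (M*L/x^2) * D := by
    have e1 : (3/π^2 + C₁)*x^4*L = (M/24) * x^4 * L := by rw [hMdef]; ring
    have e2 : (M*L/x^2) * (x^6/24) = (M/24) * x^4 * L := by
      field_simp
    have e3 : (M*L/x^2) * (x^6/24) ≤ (M*L/x^2)*D :=
      mul_le_mul_of_nonneg_left hDlb hMLx2
    linarith [htub]
  have hq : |q| ≤ M*L/x^2 := by
    rw [hqdef, abs_div, abs_of_pos hDpos, div_le_iff₀ hDpos]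
    linarith [h5]
  have hqhalf : |q| ≤ 1/2 := by
    have h1 : M*L/x^2 ≤ M/x := by
      rw [div_le_div_iff₀ (by positivity) hx0]
      have h7 := mul_le_mul_of_nonneg_left
        (mul_le_mul_of_nonneg_right hLx hx0.le) hM0.le
      linarith [h7]
    have h2' : M/x ≤ 1/2 := by
      rw [div_le_iff₀ hx0]; linarith
    linarith [hq]
  refine ⟨?_, hqhalf⟩
  -- logarithm estimate
  have hlogq : |Real.log (1-q) + q| ≤ 2*q^2 := by
    have habs : |q| < 1 := by linarith
    have h := Real.abs_log_sub_add_sum_range_le habs 1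
    have hsum : (∑ i ∈ Finset.range 1, q^(i+1)/((i:ℝ)+1)) = q := by simp
    rw [hsum] at h
    have h2' : |q|^2/(1-|q|) ≤ 2*q^2 := by
      rw [div_le_iff₀ (by linarith)]
      have hh : |q|^2 = q^2 := sq_abs q
      have h8 := mul_le_mul_of_nonneg_left hqhalf
        (show (0:ℝ) ≤ 2*q^2 by positivity)
      linarith [hh, h8]
    calc |Real.log (1-q) + q| = |q + Real.log (1-q)| := by rw [add_comm]
      _ ≤ |q|^(1+1)/(1-|q|) := h
      _ ≤ 2*q^2 := by norm_num at h2' ⊢; linarith [h2']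
  -- main identity
  have hiden : P * (t n / D) - 3*lam^3/π^2*x*L
      = (P*(t n - 3/π^2*x^4*L) + 3/π^2*L*(x^4*(P - lam^3*x^3/6) - lam^3*x*(D - x^6/6)))/D := by
    rw [eq_div_iff hDpos.ne']
    calc (P * (t n / D) - 3*lam^3/π^2*x*L) * D
        = P * (t n / D * D) - 3*lam^3/π^2*x*L*D := by ring
      _ = P * t n - 3*lam^3/π^2*x*L*D := by rw [div_mul_cancel₀ _ hDpos.ne']
      _ = P*(t n - 3/π^2*x^4*L) + 3/π^2*L*(x^4*(P - lam^3*x^3/6) - lam^3*x*(D - x^6/6)) := by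
          ring
  have hnum : |P*(t n - 3/π^2*x^4*L) + 3/π^2*L*(x^4*(P - lam^3*x^3/6) - lam^3*x*(D - x^6/6))|
      ≤ (lam^3*C₁/6)*x^7 + 3/π^2*(lam^2+lam^3)*x^6*L := by
    have h1 : |P*(t n - 3/π^2*x^4*L)| ≤ (lam^3*x^3/6)*(C₁*x^4) := by
      rw [abs_mul, abs_of_nonneg hP0]
      apply mul_le_mul hPub hbnd' (abs_nonneg _) (by positivity)
    have h2' : |x^4*(P - lam^3*x^3/6)| ≤ x^4 * (lam^2*x^2) := by
      rw [abs_mul, abs_of_nonneg (show (0:ℝ) ≤ x^4 by positivity)]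
      exact mul_le_mul_of_nonneg_left hPapprox (by positivity)
    have h3 : |lam^3*x*(D - x^6/6)| ≤ lam^3*x*x^4 := by
      rw [abs_mul, abs_of_nonneg (show (0:ℝ) ≤ lam^3*x by positivity)]
      exact mul_le_mul_of_nonneg_left hDub (by positivity)
    have h4' : |3/π^2*L*(x^4*(P - lam^3*x^3/6) - lam^3*x*(D - x^6/6))|
        ≤ 3/π^2*L*(x^4*(lam^2*x^2) + lam^3*x*x^4) := by
      rw [abs_mul, abs_of_nonneg (show (0:ℝ) ≤ 3/π^2*L by positivity)]
      apply mul_le_mul_of_nonneg_left _ (by positivity)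
      calc |x^4*(P - lam^3*x^3/6) - lam^3*x*(D - x^6/6)|
          ≤ |x^4*(P - lam^3*x^3/6)| + |lam^3*x*(D - x^6/6)| := abs_sub _ _
        _ ≤ x^4*(lam^2*x^2) + lam^3*x*x^4 := add_le_add h2' h3
    have h6 : lam^2*x^6 + lam^3*x^5 ≤ (lam^2+lam^3)*x^6 := by
      have h9 : x^5 ≤ x^6 := by
        have h10 := mul_le_mul_of_nonneg_left hx3 (pow_nonneg hx0.le 5)
        have h11 : (0:ℝ) ≤ x^5 := pow_nonneg hx0.le 5
        calc x^5 ≤ x^5*3 := by linarith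
          _ ≤ x^5*x := h10
          _ = x^6 := by ring
      linarith [mul_le_mul_of_nonneg_left h9 (show (0:ℝ) ≤ lam^3 by positivity)]
    have h7 : 3/π^2*L*(x^4*(lam^2*x^2) + lam^3*x*x^4) ≤ 3/π^2*(lam^2+lam^3)*x^6*L := by
      have h12 := mul_le_mul_of_nonneg_left h6 (show (0:ℝ) ≤ 3/π^2*L by positivity)
      linarith [h12]
    calc |P*(t n - 3/π^2*x^4*L) + 3/π^2*L*(x^4*(P - lam^3*x^3/6) - lam^3*x*(D - x^6/6))|
        ≤ |P*(t n - 3/π^2*x^4*L)| + |3/π^2*L*(x^4*(P - lam^3*x^3/6) - lam^3*x*(D - x^6/6))| :=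
          abs_add_le _ _
      _ ≤ (lam^3*x^3/6)*(C₁*x^4) + 3/π^2*(lam^2+lam^3)*x^6*L := by linarith [h1, h4', h7]
      _ = (lam^3*C₁/6)*x^7 + 3/π^2*(lam^2+lam^3)*x^6*L := by ring
  have hmain : |P * q - 3*lam^3/π^2*x*L| ≤ (4*lam^3*C₁ + 72/π^2*(lam^2+lam^3))*x := by
    rw [hqdef, hiden, abs_div, abs_of_pos hDpos, div_le_iff₀ hDpos]
    have hLx6 : 3/π^2*(lam^2+lam^3)*x^6*L ≤ 3/π^2*(lam^2+lam^3)*x^6*x := by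
      apply mul_le_mul_of_nonneg_left hLx (by positivity)
    calc |P*(t n - 3/π^2*x^4*L) + 3/π^2*L*(x^4*(P - lam^3*x^3/6) - lam^3*x*(D - x^6/6))|
        ≤ (lam^3*C₁/6)*x^7 + 3/π^2*(lam^2+lam^3)*x^6*L := hnum
      _ ≤ (lam^3*C₁/6)*x^7 + 3/π^2*(lam^2+lam^3)*x^6*x := by linarith [hLx6]
      _ = (4*lam^3*C₁ + 72/π^2*(lam^2+lam^3))*x * (x^6/24) := by ring
      _ ≤ (4*lam^3*C₁ + 72/π^2*(lam^2+lam^3))*x * D := by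
          apply mul_le_mul_of_nonneg_left hDlb (by positivity)
  -- squared term
  have hsq : P * (2*q^2) ≤ (lam^3*M^2/3) * x := by
    have hq2 : q^2 ≤ (M*L/x^2)^2 := by
      rw [← sq_abs q]
      exact pow_le_pow_left₀ (abs_nonneg q) hq 2
    calc P * (2*q^2) ≤ (lam^3*x^3/6) * (2*(M*L/x^2)^2) := by
          apply mul_le_mul hPub (by linarith) (by positivity) (by positivity)
      _ = (lam^3*M^2/3) * (L^2/x) := by
          field_simp; ring
      _ ≤ (lam^3*M^2/3) * x := by
          apply mul_le_mul_of_nonneg_left _ (by positivity)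
          rw [div_le_iff₀ hx0]
          have h13 := mul_le_mul hLx hLx hL0 hx0.le
          calc L^2 = L*L := sq L
            _ ≤ x*x := h13
  have hPlog : |P * Real.log (1-q) + P*q| ≤ (lam^3*M^2/3) * x := by
    have he : |P * Real.log (1-q) + P*q| = P * |Real.log (1-q) + q| := by
      rw [show P * Real.log (1-q) + P*q = P * (Real.log (1-q) + q) from by ring,
        abs_mul, abs_of_nonneg hP0]
    rw [he]
    calc P * |Real.log (1-q) + q| ≤ P * (2*q^2) :=
          mul_le_mul_of_nonneg_left hlogq hP0
      _ ≤ (lam^3*M^2/3) * x := hsq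
  have e : P * Real.log (1-q) + 3*lam^3/π^2*x*L
      = (P*Real.log (1-q) + P*q) - (P*q - 3*lam^3/π^2*x*L) := by ring
  calc |P * Real.log (1 - q) + 3*lam^3/π^2*x*L|
      = |(P*Real.log (1-q) + P*q) - (P*q - 3*lam^3/π^2*x*L)| := by rw [e]
    _ ≤ |P*Real.log (1-q) + P*q| + |P*q - 3*lam^3/π^2*x*L| := abs_sub _ _
    _ ≤ (lam^3*M^2/3) * x + (4*lam^3*C₁ + 72/π^2*(lam^2+lam^3))*x :=
        add_le_add hPlog hmain
    _ = (lam^3*M^2/3 + (4*lam^3*C₁ + 72/π^2*(lam^2+lam^3))) * x := by ring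

theorem heuristic_count_asymptotics (lam : ℝ) (hlam : 0 < lam)
    (t : ℕ → ℝ)
    (ht : (fun n : ℕ => t n - 3 / π ^ 2 * (n : ℝ) ^ 4 * Real.log n)
      =O[atTop] (fun n : ℕ => (n : ℝ) ^ 4)) :
    (lam ≠ π / Real.sqrt 3 →
      (fun n : ℕ => Real.log (((n ^ 2).choose ⌊lam * n⌋₊ : ℝ) *
          (1 - t n / ((n ^ 2).choose 3 : ℝ)) ^ ((⌊lam * n⌋₊).choose 3)))
        ~[atTop] (fun n : ℕ => (lam - 3 * lam ^ 3 / π ^ 2) * n * Real.log n)) ∧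
    (lam < π / Real.sqrt 3 →
      Tendsto (fun n : ℕ => Real.log (((n ^ 2).choose ⌊lam * n⌋₊ : ℝ) *
          (1 - t n / ((n ^ 2).choose 3 : ℝ)) ^ ((⌊lam * n⌋₊).choose 3)))
        atTop atTop) ∧
    (π / Real.sqrt 3 < lam →
      Tendsto (fun n : ℕ => Real.log (((n ^ 2).choose ⌊lam * n⌋₊ : ℝ) *
          (1 - t n / ((n ^ 2).choose 3 : ℝ)) ^ ((⌊lam * n⌋₊).choose 3)))
        atTop atBot) := by
  have hπ : (0:ℝ) < π := Real.pi_pos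
  have hs3 : (0:ℝ) < Real.sqrt 3 := Real.sqrt_pos.mpr (by norm_num)
  have hsq3 : (π / Real.sqrt 3)^2 = π^2/3 := by
    rw [div_pow, Real.sq_sqrt (by norm_num : (0:ℝ) ≤ 3)]
  set c : ℝ := lam - 3 * lam ^ 3 / π ^ 2 with hcdef
  set f : ℕ → ℝ := fun n : ℕ => Real.log (((n ^ 2).choose ⌊lam * n⌋₊ : ℝ) *
      (1 - t n / ((n ^ 2).choose 3 : ℝ)) ^ ((⌊lam * n⌋₊).choose 3)) with hfdef
  set g : ℕ → ℝ := fun n : ℕ => c * n * Real.log n with hgdef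
  -- the big-O estimate
  obtain ⟨CB, hB⟩ := partB lam hlam t ht
  have hO : (fun n : ℕ => f n - g n) =O[atTop] (fun n : ℕ => (n:ℝ)) := by
    rw [isBigO_iff]
    refine ⟨(1 + lam + lam * (|Real.log lam| + 1)) + CB, ?_⟩
    filter_upwards [partA lam hlam, hB] with n hA hBn
    obtain ⟨hpos, hA2⟩ := hA
    obtain ⟨hB2, hqhalf⟩ := hBn
    have hqpos : (0:ℝ) < 1 - t n / ((n^2).choose 3 : ℝ) := by
      rcases abs_le.mp hqhalf with ⟨h1, h2⟩
      linarith
    have hsplit : f n = Real.log ((n^2).choose ⌊lam * n⌋₊ : ℝ)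
        + ((⌊lam * n⌋₊).choose 3 : ℝ) * Real.log (1 - t n / ((n^2).choose 3 : ℝ)) := by
      simp only [hfdef]
      rw [Real.log_mul hpos.ne' (pow_ne_zero _ hqpos.ne'), Real.log_pow]
    have he : f n - g n = (Real.log ((n^2).choose ⌊lam * n⌋₊ : ℝ) - lam * n * Real.log n)
        + (((⌊lam * n⌋₊).choose 3 : ℝ) * Real.log (1 - t n / ((n^2).choose 3 : ℝ))
          + 3*lam^3/π^2 * n * Real.log n) := by
      rw [hsplit, hgdef, hcdef]; ring
    have hnn : ‖(n:ℝ)‖ = (n:ℝ) := by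
      rw [Real.norm_eq_abs, abs_of_nonneg (Nat.cast_nonneg n)]
    rw [hnn, Real.norm_eq_abs, he]
    calc |_ + _| ≤ _ + _ := abs_add_le _ _
      _ ≤ (1 + lam + lam * (|Real.log lam| + 1)) * n + CB * n := add_le_add hA2 hB2
      _ = ((1 + lam + lam * (|Real.log lam| + 1)) + CB) * n := by ring
  -- the equivalence
  have hmain : lam ≠ π / Real.sqrt 3 → f ~[atTop] g := by
    intro hne
    have hc : c ≠ 0 := by
      intro h0
      apply hne
      have h1 : lam^2 = π^2/3 := by
        have h2 : lam * (π^2 - 3*lam^2) = 0 := by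
          rw [hcdef] at h0
          field_simp at h0
          nlinarith [h0]
        rcases mul_eq_zero.mp h2 with h3 | h3
        · exact absurd h3 hlam.ne'
        · nlinarith [h3]
      have : lam^2 = (π / Real.sqrt 3)^2 := by rw [hsq3, h1]
      have hppos : 0 < π / Real.sqrt 3 := by positivity
      nlinarith [this, hlam, hppos]
    have hlo : (fun n : ℕ => (n:ℝ)) =o[atTop] g := by
      have h1 : (fun _ : ℕ => (1:ℝ)) =o[atTop] fun n : ℕ => Real.log n := by
        rw [isLittleO_const_left]
        right
        exact tendsto_norm_atTop_atTop.comp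
          (Real.tendsto_log_atTop.comp tendsto_natCast_atTop_atTop)
      have h2 : (fun n : ℕ => (n:ℝ) * 1) =o[atTop] fun n : ℕ => (n:ℝ) * Real.log n :=
        (isBigO_refl (fun n : ℕ => (n:ℝ)) atTop).mul_isLittleO h1
      have h3 : (fun n : ℕ => (n:ℝ)) =o[atTop] fun n : ℕ => (n:ℝ) * Real.log n := by
        simpa using h2
      have h4 := h3.const_mul_right hc
      apply h4.congr_right
      intro n; rw [hgdef]; ring
    exact hO.trans_isLittleO hlo
  refine ⟨hmain, ?_, ?_⟩
  · intro hlt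
    have hne : lam ≠ π / Real.sqrt 3 := ne_of_lt hlt
    have hc : 0 < c := by
      have h1 : lam^2 < π^2/3 := by
        have := hsq3
        nlinarith [hlt, hlam, hs3]
      rw [hcdef]
      have h2 : 3*lam^3 < lam * π^2 := by nlinarith [hlam]
      rw [sub_pos, div_lt_iff₀ (by positivity)]
      nlinarith [h2]
    have hg : Tendsto g atTop atTop := by
      have h1 : Tendsto (fun n : ℕ => (n:ℝ) * Real.log n) atTop atTop :=
        tendsto_natCast_atTop_atTop.atTop_mul_atTop₀
          (Real.tendsto_log_atTop.comp tendsto_natCast_atTop_atTop)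
      have h2 := h1.const_mul_atTop hc
      apply h2.congr
      intro n; rw [hgdef]; ring
    exact ((hmain hne).symm.tendsto_atTop) hg
  · intro hlt
    have hne : lam ≠ π / Real.sqrt 3 := ne_of_gt hlt
    have hc : c < 0 := by
      have h1 : π^2/3 < lam^2 := by
        have hp2 : (π/Real.sqrt 3)^2 < lam^2 := by
          nlinarith [hlt, div_pos hπ hs3]
        rw [hsq3] at hp2; exact hp2
      rw [hcdef]
      rw [sub_neg, lt_div_iff₀ (by positivity)]
      nlinarith [h1, hlam]
    have hg : Tendsto g atTop atBot := by
      have h1 : Tendsto (fun n : ℕ => (n:ℝ) * Real.log n) atTop atTop :=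
        tendsto_natCast_atTop_atTop.atTop_mul_atTop₀
          (Real.tendsto_log_atTop.comp tendsto_natCast_atTop_atTop)
      have h2 := (tendsto_const_mul_atBot_of_neg hc).mpr h1
      apply h2.congr
      intro n; rw [hgdef]; ring
    exact ((hmain hne).symm.tendsto_atBot) hg
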